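/- Let θ > 0 and let (B_k)_{k≥2} be a sequence of independent random variables on a probability space with P(B_k = 1) = θ/(θ+k-1) and P(B_k = 0) = (k-1)/(θ+k-1). Then K(n)/log n → θ almost surely as n → ∞, where K(n) = 1 + ∑_{k=2}^{n} B_k. -/

import Mathlib

open MeasureTheory ProbabilityTheory Filter

private lemma ec_bernoulli {Ω : Type*} [MeasurableSpace Ω] (μ : Measure Ω)
    [IsProbabilityMeasure μ] (X : Ω → ℕ) (hX : Measurable X) (q : ℝ)
    (hq0 : 0 ≤ q) (hq1 : q ≤ 1)
    (h1 : μ {ω | X ω = 1} = ENNReal.ofReal q)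
    (h0 : μ {ω | X ω = 0} = ENNReal.ofReal (1 - q)) :
    (∫ ω, (X ω : ℝ) ∂μ) = q ∧ MemLp (fun ω => (X ω : ℝ)) 2 μ ∧
      variance (fun ω => (X ω : ℝ)) μ ≤ q := by
  have hm1 : MeasurableSet {ω | X ω = 1} := hX (measurableSet_singleton 1)
  have hm0 : MeasurableSet {ω | X ω = 0} := hX (measurableSet_singleton 0)
  have hdisj : Disjoint {ω | X ω = 0} {ω | X ω = 1} := by
    rw [Set.disjoint_left]; rintro ω (h : X ω = 0) (h' : X ω = 1); omega
  have hunion : μ ({ω | X ω = 0} ∪ {ω | X ω = 1}) = 1 := by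
    rw [measure_union hdisj hm1, h0, h1, ← ENNReal.ofReal_add (by linarith) hq0]
    norm_num
  have hae : ∀ᵐ ω ∂μ, X ω = 0 ∨ X ω = 1 := by
    rw [ae_iff]
    have : {ω | ¬(X ω = 0 ∨ X ω = 1)} = ({ω | X ω = 0} ∪ {ω | X ω = 1})ᶜ := by
      ext ω; simp [Set.mem_union, not_or]
    rw [this, measure_compl (hm0.union hm1) (measure_ne_top μ _), hunion]
    simp
  have hind : (fun ω => (X ω : ℝ)) =ᵐ[μ] ({ω | X ω = 1}).indicator 1 := by
    filter_upwards [hae] with ω hω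
    rcases hω with h | h <;> simp [Set.indicator_apply, h]
  have hind2 : (fun ω => (X ω : ℝ) ^ 2) =ᵐ[μ] ({ω | X ω = 1}).indicator 1 := by
    filter_upwards [hae] with ω hω
    rcases hω with h | h <;> simp [Set.indicator_apply, h]
  have hint : (∫ ω, (X ω : ℝ) ∂μ) = q := by
    rw [integral_congr_ae hind, integral_indicator_one hm1, measureReal_def, h1, ENNReal.toReal_ofReal hq0]
  have hmem : MemLp (fun ω => (X ω : ℝ)) 2 μ := by
    refine MemLp.of_bound ((measurable_from_top.comp hX : Measurable fun ω => (X ω : ℝ)).aestronglyMeasurable) 1 ?_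
    filter_upwards [hae] with ω hω
    rcases hω with h | h <;> simp [h]
  refine ⟨hint, hmem, ?_⟩
  have hsq : (∫ ω, (X ω : ℝ) ^ 2 ∂μ) = q := by
    rw [integral_congr_ae hind2, integral_indicator_one hm1, measureReal_def, h1, ENNReal.toReal_ofReal hq0]
  rw [variance_eq_sub hmem]
  simp only [Pi.pow_apply]
  rw [hsq, hint]
  nlinarith [sq_nonneg q]

private lemma ec_sum_inv_sq (m : ℕ) :
    ∑ i ∈ Finset.range m, (((i : ℝ) + 1) ^ 2)⁻¹ ≤ 2 - (m : ℝ)⁻¹ := by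
  induction m with
  | zero => norm_num
  | succ m ih =>
    rw [Finset.sum_range_succ]
    rcases Nat.eq_zero_or_pos m with hm | hm
    · subst hm; norm_num
    have hm' : (0:ℝ) < m := by exact_mod_cast hm
    push_cast
    have key : (((m:ℝ) + 1) ^ 2)⁻¹ ≤ (m:ℝ)⁻¹ - ((m:ℝ) + 1)⁻¹ := by
      have h1 : (m:ℝ)⁻¹ - ((m:ℝ) + 1)⁻¹ = ((m:ℝ) * ((m:ℝ)+1))⁻¹ := by
        field_simp
        ring
      rw [h1]
      gcongr
      nlinarith
    linarith

private lemma ec_m_log (θ : ℝ) (hθ : 0 < θ) (n : ℕ) (hn : 1 ≤ n) :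
    |(∑ k ∈ Finset.Icc 2 n, θ / (θ + k - 1)) - θ * Real.log n| ≤ θ * (1 + 2 * θ) := by
  obtain ⟨m, rfl⟩ : ∃ m, n = m + 1 := ⟨n - 1, by omega⟩
  have hsum : (∑ k ∈ Finset.Icc 2 (m + 1), θ / (θ + k - 1))
      = ∑ i ∈ Finset.range m, θ / (θ + i + 1) := by
    rw [← Finset.Ico_add_one_right_eq_Icc, Finset.sum_Ico_eq_sum_range]
    have h2 : m + 1 + 1 - 2 = m := by omega
    rw [h2]
    refine Finset.sum_congr rfl fun i _ => ?_
    push_cast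
    ring_nf
  rw [hsum]
  have hH : ∀ i : ℕ, (0:ℝ) < (i:ℝ) + 1 := fun i => by positivity
  have hθi : ∀ i : ℕ, (0:ℝ) < θ + i + 1 := fun i => by positivity
  have hup : ∑ i ∈ Finset.range m, θ / (θ + i + 1)
      ≤ θ * ∑ i ∈ Finset.range m, ((i:ℝ) + 1)⁻¹ := by
    rw [Finset.mul_sum]
    refine Finset.sum_le_sum fun i _ => ?_
    rw [div_eq_mul_inv]
    gcongr
    linarith [hθi i]
  have hlow : θ * ∑ i ∈ Finset.range m, ((i:ℝ) + 1)⁻¹ - 2 * θ ^ 2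
      ≤ ∑ i ∈ Finset.range m, θ / (θ + i + 1) := by
    have hgap : θ * ∑ i ∈ Finset.range m, ((i:ℝ) + 1)⁻¹
        - ∑ i ∈ Finset.range m, θ / (θ + i + 1)
        ≤ θ ^ 2 * ∑ i ∈ Finset.range m, (((i:ℝ) + 1) ^ 2)⁻¹ := by
      rw [Finset.mul_sum, Finset.mul_sum, ← Finset.sum_sub_distrib]
      refine Finset.sum_le_sum fun i _ => ?_
      have e1 : θ * ((i:ℝ) + 1)⁻¹ - θ / (θ + i + 1)
          = θ ^ 2 * (((i:ℝ) + 1) * (θ + i + 1))⁻¹ := by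
        field_simp
        ring
      rw [e1]
      have hin : (((i:ℝ) + 1) * (θ + i + 1))⁻¹ ≤ (((i:ℝ) + 1) ^ 2)⁻¹ := by
        have h1 : ((i:ℝ) + 1) ^ 2 ≤ ((i:ℝ) + 1) * (θ + i + 1) := by nlinarith [hH i]
        have h2 : (0:ℝ) < ((i:ℝ) + 1) ^ 2 := by positivity
        exact inv_anti₀ h2 h1
      exact mul_le_mul_of_nonneg_left hin (sq_nonneg θ)
    have h2 : θ ^ 2 * ∑ i ∈ Finset.range m, (((i:ℝ) + 1) ^ 2)⁻¹ ≤ 2 * θ ^ 2 := by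
      have h3 := ec_sum_inv_sq m
      have h4 : (0:ℝ) ≤ (m : ℝ)⁻¹ := by positivity
      nlinarith [sq_nonneg θ]
    linarith
  have hh : (harmonic m : ℝ) = ∑ i ∈ Finset.range m, ((i:ℝ) + 1)⁻¹ := by
    rw [harmonic]
    push_cast
    rfl
  have hharm1 : Real.log (m + 1 : ℕ) ≤ ∑ i ∈ Finset.range m, ((i:ℝ) + 1)⁻¹ := by
    have := log_add_one_le_harmonic m
    rw [hh] at this
    exact_mod_cast this
  have hharm2 : ∑ i ∈ Finset.range m, ((i:ℝ) + 1)⁻¹ ≤ 1 + Real.log (m + 1 : ℕ) := by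
    have h1 := harmonic_le_one_add_log m
    rw [hh] at h1
    have hlog : Real.log (m : ℝ) ≤ Real.log ((m : ℕ) + 1 : ℕ) := by
      rcases Nat.eq_zero_or_pos m with h | h
      · simp [h]
      · have hm' : (0:ℝ) < m := by exact_mod_cast h
        push_cast
        gcongr
        linarith
    linarith
  rw [abs_le]
  constructor
  · nlinarith
  · nlinarith
private lemma ec_rpow_calc (x : ℝ) (hx : 1 ≤ x) (A L : ℝ) (hL : 0 < L) :
    (A * x ^ 2) / ((x ^ (-(4:ℝ)⁻¹) * (x ^ 2 * L)) ^ 2) = A / L ^ 2 * x ^ (-(3:ℝ)/2) := by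
  have hx0 : (0:ℝ) < x := lt_of_lt_of_le one_pos hx
  have e1 : (x ^ (-(4:ℝ)⁻¹) * (x ^ 2 * L)) ^ 2 = x ^ ((7:ℝ)/2) * L ^ 2 := by
    rw [mul_pow, mul_pow, ← Real.rpow_natCast (x ^ (-(4:ℝ)⁻¹)) 2, ← Real.rpow_mul hx0.le,
      ← Real.rpow_natCast (x ^ (2:ℕ) : ℝ) 2, ← Real.rpow_natCast x 2, ← Real.rpow_mul hx0.le,
      ← mul_assoc, ← Real.rpow_add hx0]
    norm_num
  rw [e1, ← Real.rpow_natCast x 2]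
  have h7 : x ^ ((7:ℝ)/2) ≠ 0 := (Real.rpow_pos_of_pos hx0 _).ne'
  have e2 : x ^ ((2:ℕ):ℝ) = x ^ (-(3:ℝ)/2) * x ^ ((7:ℝ)/2) := by
    rw [← Real.rpow_add hx0]
    norm_num
  rw [e2]
  field_simp

set_option maxHeartbeats 2000000 in
/-- The strong law of large numbers of Korwar and Hollander: if `(B_k)_{k≥2}` are
independent Bernoulli random variables with `P(B_k = 1) = θ/(θ+k-1)` and
`K(n) = 1 + ∑_{k=2}^n B_k` (the number of cycles of an Ewens(n, θ) permutation under the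
Feller coupling), then `K(n)/log n → θ` almost surely. -/
theorem ewens_cycles_slln {Ω : Type*} [MeasurableSpace Ω]
    (μ : Measure Ω) [IsProbabilityMeasure μ]
    (θ : ℝ) (hθ : 0 < θ)
    (B : ℕ → Ω → ℕ) (hmeas : ∀ k, Measurable (B k))
    (hindep : iIndepFun
      (fun k : {k : ℕ // 2 ≤ k} => B k.val) μ)
    (hlaw1 : ∀ k, 2 ≤ k → μ {ω | B k ω = 1} = ENNReal.ofReal (θ / (θ + k - 1)))
    (hlaw0 : ∀ k, 2 ≤ k → μ {ω | B k ω = 0} = ENNReal.ofReal (((k : ℝ) - 1) / (θ + k - 1))) :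
    ∀ᵐ ω ∂μ,
      Tendsto (fun n : ℕ => (1 + ∑ k ∈ Finset.Icc 2 n, (B k ω : ℝ)) / Real.log n)
        atTop (nhds θ) := by
  classical
  have hlog2 : (0:ℝ) < Real.log 2 := Real.log_pos (by norm_num)
  set K : ℝ := θ * (1 + 2 * θ) with hKdef
  have hK0 : (0:ℝ) ≤ K := by nlinarith
  set q : ℕ → ℝ := fun k => θ / (θ + k - 1) with hqdef
  set mf : ℕ → ℝ := fun n => ∑ k ∈ Finset.Icc 2 n, q k with hmfdef
  set S : ℕ → Ω → ℝ := fun n ω => ∑ k ∈ Finset.Icc 2 n, (B k ω : ℝ) with hSdef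
  have hθk : ∀ k : ℕ, 2 ≤ k → (0:ℝ) < θ + k - 1 := by
    intro k hk
    have : (2:ℝ) ≤ k := by exact_mod_cast hk
    linarith
  have hq0 : ∀ k : ℕ, 2 ≤ k → 0 ≤ q k := fun k hk => le_of_lt (div_pos hθ (hθk k hk))
  have hq1 : ∀ k : ℕ, 2 ≤ k → q k ≤ 1 := by
    intro k hk
    rw [hqdef, div_le_one (hθk k hk)]
    have : (2:ℝ) ≤ k := by exact_mod_cast hk
    linarith
  have hber : ∀ k : ℕ, 2 ≤ k → (∫ ω, (B k ω : ℝ) ∂μ) = q k ∧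
      MemLp (fun ω => (B k ω : ℝ)) 2 μ ∧ variance (fun ω => (B k ω : ℝ)) μ ≤ q k := by
    intro k hk
    refine ec_bernoulli μ (B k) (hmeas k) (q k) (hq0 k hk) (hq1 k hk) (hlaw1 k hk) ?_
    rw [hlaw0 k hk]
    congr 1
    rw [hqdef, eq_sub_iff_add_eq, ← add_div, div_eq_one_iff_eq (ne_of_gt (hθk k hk))]
    ring
  -- mean, memℒp, variance of partial sums
  have hSfun : ∀ n : ℕ, S n = ∑ k ∈ Finset.Icc 2 n, (fun ω => (B k ω : ℝ)) := by
    intro n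
    funext ω
    rw [hSdef, Finset.sum_apply]
  have hSmem : ∀ n : ℕ, MemLp (S n) 2 μ := by
    intro n
    rw [hSfun n]
    exact memLp_finsetSum' _ (fun k hk => (hber k (Finset.mem_Icc.1 hk).1).2.1)
  have hSmean : ∀ n : ℕ, (∫ ω, S n ω ∂μ) = mf n := by
    intro n
    rw [hSdef, hmfdef]
    rw [integral_finset_sum]
    · exact Finset.sum_congr rfl fun k hk => (hber k (Finset.mem_Icc.1 hk).1).1
    · exact fun k hk => ((hber k (Finset.mem_Icc.1 hk).1).2.1.integrable one_le_two)
  have hSvar : ∀ n : ℕ, variance (S n) μ ≤ mf n := by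
    intro n
    rw [hSfun n]
    have hpair : Set.Pairwise ↑(Finset.Icc 2 n) fun i j =>
        IndepFun (fun ω => (B i ω : ℝ)) (fun ω => (B j ω : ℝ)) μ := by
      intro i hi j hj hij
      have hi2 : 2 ≤ i := (Finset.mem_Icc.1 (Finset.mem_coe.1 hi)).1
      have hj2 : 2 ≤ j := (Finset.mem_Icc.1 (Finset.mem_coe.1 hj)).1
      have hne : (⟨i, hi2⟩ : {k : ℕ // 2 ≤ k}) ≠ ⟨j, hj2⟩ := by
        simp only [ne_eq, Subtype.mk.injEq]
        exact hij
      have hbase := hindep.indepFun hne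
      exact hbase.comp measurable_from_top measurable_from_top
    rw [IndepFun.variance_sum (fun k hk => (hber k (Finset.mem_Icc.1 hk).1).2.1) hpair]
    exact Finset.sum_le_sum fun k hk => (hber k (Finset.mem_Icc.1 hk).1).2.2
  -- log-comparison bounds for mf
  have hmf_ub : ∀ n : ℕ, 1 ≤ n → mf n ≤ θ * Real.log n + K := by
    intro n hn
    have := abs_le.1 (ec_m_log θ hθ n hn)
    rw [hmfdef]; linarith [this.2]
  have hmf_lb : ∀ n : ℕ, 1 ≤ n → θ * Real.log n - K ≤ mf n := by
    intro n hn
    have := abs_le.1 (ec_m_log θ hθ n hn)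
    rw [hmfdef]; linarith [this.1]
  have hmf_mono : ∀ ⦃a b : ℕ⦄, a ≤ b → mf a ≤ mf b := by
    intro a b hab
    exact Finset.sum_le_sum_of_subset_of_nonneg
      (Finset.Icc_subset_Icc_right hab) (fun k hk _ => hq0 k (Finset.mem_Icc.1 hk).1)
  have hS_mono : ∀ (ω : Ω) ⦃a b : ℕ⦄, a ≤ b → S a ω ≤ S b ω := by
    intro ω a b hab
    exact Finset.sum_le_sum_of_subset_of_nonneg
      (Finset.Icc_subset_Icc_right hab) (fun k _ _ => Nat.cast_nonneg _)
  -- log of the subsequence points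
  have hlogN : ∀ j : ℕ, Real.log ((2:ℕ) ^ (j ^ 2) : ℕ) = (j:ℝ) ^ 2 * Real.log 2 := by
    intro j
    push_cast
    rw [Real.log_pow]
    push_cast
    ring
  -- the thresholds
  set c : ℕ → ℝ := fun j => (j:ℝ) ^ (-(4:ℝ)⁻¹) * ((j:ℝ) ^ 2 * Real.log 2) with hcdef
  have hc0 : ∀ j : ℕ, 0 ≤ c j := by
    intro j
    rw [hcdef]
    have := Real.rpow_nonneg (Nat.cast_nonneg (α := ℝ) j) (-(4:ℝ)⁻¹)
    positivity
  have hcpos : ∀ j : ℕ, 1 ≤ j → 0 < c j := by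
    intro j hj
    have hj' : (0:ℝ) < j := by exact_mod_cast hj
    rw [hcdef]
    have := Real.rpow_pos_of_pos hj' (-(4:ℝ)⁻¹)
    positivity
  -- the bad events
  set s : ℕ → Set Ω := fun j =>
    {ω | c (j+1) ≤ |S ((2:ℕ) ^ ((j+1) ^ 2)) ω - mf ((2:ℕ) ^ ((j+1) ^ 2))|} with hsdef
  set C₂ : ℝ := (θ * Real.log 2 + K) / (Real.log 2) ^ 2 with hC₂def
  have hC₂0 : 0 ≤ C₂ := by positivity
  have hμs : ∀ j : ℕ, μ (s j) ≤ ENNReal.ofReal (C₂ * ((j:ℝ) + 1) ^ (-(3:ℝ)/2)) := by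
    intro j
    have hcp : 0 < c (j+1) := hcpos (j+1) (by omega)
    have hcheb := meas_ge_le_variance_div_sq (μ := μ) (hSmem ((2:ℕ) ^ ((j+1) ^ 2))) hcp
    rw [hSmean ((2:ℕ) ^ ((j+1) ^ 2))] at hcheb
    have hset : s j = {ω | c (j+1) ≤ |S ((2:ℕ) ^ ((j+1) ^ 2)) ω - mf ((2:ℕ) ^ ((j+1) ^ 2))|} :=
      rfl
    rw [hset]
    refine le_trans hcheb (ENNReal.ofReal_le_ofReal ?_)
    set x : ℝ := (j:ℝ) + 1 with hxdef
    have hx1 : (1:ℝ) ≤ x := by rw [hxdef]; have : (0:ℝ) ≤ j := Nat.cast_nonneg j; linarith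
    have hvar2 : variance (S ((2:ℕ) ^ ((j+1) ^ 2))) μ ≤ (θ * Real.log 2 + K) * x ^ 2 := by
      refine le_trans (hSvar _) ?_
      refine le_trans (hmf_ub _ Nat.one_le_two_pow) ?_
      rw [hlogN (j+1)]
      have hxx : ((j+1 : ℕ):ℝ) = x := by rw [hxdef]; push_cast; ring
      rw [hxx]
      have hx2 : (1:ℝ) ≤ x ^ 2 := by nlinarith
      nlinarith [mul_nonneg hK0 (by linarith : (0:ℝ) ≤ x ^ 2 - 1)]
    have hc2 : c (j+1) = x ^ (-(4:ℝ)⁻¹) * (x ^ 2 * Real.log 2) := by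
      rw [hcdef, hxdef]
      push_cast
      ring_nf
    calc variance (S ((2:ℕ) ^ ((j+1) ^ 2))) μ / c (j+1) ^ 2
        ≤ ((θ * Real.log 2 + K) * x ^ 2) / c (j+1) ^ 2 := by gcongr
      _ = C₂ * x ^ (-(3:ℝ)/2) := by
          rw [hc2, ec_rpow_calc x hx1 _ _ hlog2, hC₂def]
  have hsum : (∑' j, μ (s j)) ≠ ⊤ := by
    have hsummable : Summable (fun j : ℕ => C₂ * ((j:ℝ) + 1) ^ (-(3:ℝ)/2)) := by
      apply Summable.mul_left
      have h := Real.summable_nat_rpow (p := -(3:ℝ)/2) |>.2 (by norm_num)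
      have h2 := (summable_nat_add_iff 1).2 h
      refine h2.congr fun j => ?_
      push_cast
      ring_nf
    have hnn : ∀ j : ℕ, 0 ≤ C₂ * ((j:ℝ) + 1) ^ (-(3:ℝ)/2) := fun j =>
      mul_nonneg hC₂0 (Real.rpow_nonneg (by positivity) _)
    refine ne_top_of_le_ne_top (b := ENNReal.ofReal (∑' j : ℕ, C₂ * ((j:ℝ) + 1) ^ (-(3:ℝ)/2)))
      ENNReal.ofReal_ne_top ?_
    rw [ENNReal.ofReal_tsum_of_nonneg hnn hsummable]
    exact ENNReal.tsum_le_tsum hμs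
  have hBC := MeasureTheory.ae_eventually_notMem hsum
  -- deterministic part : mf n / log n → θ
  have hloginf : Tendsto (fun n : ℕ => Real.log n) atTop atTop :=
    Real.tendsto_log_atTop.comp tendsto_natCast_atTop_atTop
  have hinvlog : Tendsto (fun n : ℕ => (Real.log n)⁻¹) atTop (nhds 0) :=
    hloginf.inv_tendsto_atTop
  have hmf_lim : Tendsto (fun n : ℕ => mf n / Real.log n) atTop (nhds θ) := by
    have hd : Tendsto (fun n : ℕ => (mf n - θ * Real.log n) / Real.log n) atTop (nhds 0) := by
      apply squeeze_zero_norm' (a := fun n : ℕ => K * (Real.log n)⁻¹)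
      · filter_upwards [eventually_ge_atTop 2] with n hn
        have hn1 : (1:ℝ) < n := by exact_mod_cast lt_of_lt_of_le one_lt_two hn
        have hlpos : 0 < Real.log n := Real.log_pos hn1
        have hbound : |mf n - θ * Real.log n| ≤ K := by
          rw [hKdef]
          exact ec_m_log θ hθ n (by omega)
        rw [norm_div, Real.norm_eq_abs, Real.norm_eq_abs, abs_of_pos hlpos,
          div_eq_mul_inv]
        exact mul_le_mul_of_nonneg_right hbound (by positivity)
      · simpa using hinvlog.const_mul K
    have hd2 : Tendsto (fun n : ℕ => θ + (mf n - θ * Real.log n) / Real.log n)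
        atTop (nhds (θ + 0)) := tendsto_const_nhds.add hd
    rw [add_zero] at hd2
    refine hd2.congr' ?_
    filter_upwards [eventually_ge_atTop 2] with n hn
    have hn1 : (1:ℝ) < n := by exact_mod_cast lt_of_lt_of_le one_lt_two hn
    have hlpos : 0 < Real.log n := Real.log_pos hn1
    field_simp
    ring
  have h1 : Tendsto (fun n : ℕ => 1 / Real.log n) atTop (nhds 0) := by
    simpa [one_div] using hinvlog
  -- the constant in the final bound
  set C₃ : ℝ := (3 * θ * Real.log 2 + 2 * K) / Real.log 2 with hC₃def
  have hC₃0 : 0 ≤ C₃ := by positivity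
  set G : ℕ → ℝ := fun j => 5 * (j:ℝ) ^ (-(4:ℝ)⁻¹) + C₃ / j with hGdef
  have hGlim : Tendsto G atTop (nhds 0) := by
    have t1 : Tendsto (fun j : ℕ => (j:ℝ) ^ (-(4:ℝ)⁻¹)) atTop (nhds 0) :=
      (tendsto_rpow_neg_atTop (by norm_num : (0:ℝ) < 4⁻¹)).comp tendsto_natCast_atTop_atTop
    have t2 := tendsto_const_div_atTop_nhds_zero_nat C₃
    have t3 := (t1.const_mul 5).add t2
    rw [hGdef]
    simpa using t3
  have hjlim : Tendsto (fun n : ℕ => Nat.sqrt (Nat.log 2 n)) atTop atTop := by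
    rw [tendsto_atTop_atTop]
    intro b
    refine ⟨2 ^ (b ^ 2), fun n hn => ?_⟩
    have h1 : b ^ 2 ≤ Nat.log 2 n := by
      calc b ^ 2 = Nat.log 2 (2 ^ (b ^ 2)) := (Nat.log_pow one_lt_two _).symm
        _ ≤ Nat.log 2 n := Nat.log_mono_right hn
    calc b = Nat.sqrt (b ^ 2) := (Nat.sqrt_eq' b).symm
      _ ≤ Nat.sqrt (Nat.log 2 n) := Nat.sqrt_le_sqrt h1
  -- main a.s. argument
  filter_upwards [hBC] with ω hω
  have hT0 : Tendsto (fun n : ℕ => (S n ω - mf n) / Real.log n) atTop (nhds 0) := by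
    obtain ⟨J₀, hJ₀⟩ := eventually_atTop.1 hω
    have hωJ : ∀ j : ℕ, J₀ + 1 ≤ j →
        |S ((2:ℕ) ^ (j ^ 2)) ω - mf ((2:ℕ) ^ (j ^ 2))| ≤ c j := by
      intro j hj
      obtain ⟨i, rfl⟩ : ∃ i, j = i + 1 := ⟨j - 1, by omega⟩
      have hi := hJ₀ i (by omega)
      simp only [hsdef, Set.mem_setOf_eq, not_le] at hi
      exact hi.le
    set J : ℕ := max (J₀ + 1) 1 with hJdef
    have hJ1 : 1 ≤ J := le_max_right _ _
    apply squeeze_zero_norm' (a := fun n : ℕ => G (Nat.sqrt (Nat.log 2 n)))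
    swap
    · exact hGlim.comp hjlim
    rw [eventually_atTop]
    refine ⟨2 ^ (J ^ 2), fun n hn => ?_⟩
    set j := Nat.sqrt (Nat.log 2 n) with hjdef
    have hn1 : 1 ≤ n := le_trans Nat.one_le_two_pow hn
    have hJj : J ≤ j := by
      have h1 : J ^ 2 ≤ Nat.log 2 n := by
        calc J ^ 2 = Nat.log 2 (2 ^ (J ^ 2)) := (Nat.log_pow one_lt_two _).symm
          _ ≤ Nat.log 2 n := Nat.log_mono_right hn
      calc J = Nat.sqrt (J ^ 2) := (Nat.sqrt_eq' J).symm
        _ ≤ j := Nat.sqrt_le_sqrt h1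
    have hj1 : 1 ≤ j := le_trans hJ1 hJj
    have hjreal : (1:ℝ) ≤ (j:ℝ) := by exact_mod_cast hj1
    have hjpos : (0:ℝ) < (j:ℝ) := lt_of_lt_of_le one_pos hjreal
    have han : (2:ℕ) ^ (j ^ 2) ≤ n := by
      calc (2:ℕ) ^ (j ^ 2) ≤ 2 ^ (Nat.log 2 n) :=
            Nat.pow_le_pow_right (by norm_num) (Nat.sqrt_le' _)
        _ ≤ n := Nat.pow_log_le_self 2 (by omega)
    have hnb : n ≤ (2:ℕ) ^ ((j + 1) ^ 2) := by
      have h2 : Nat.log 2 n + 1 ≤ (j + 1) ^ 2 := by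
        have h3 : Nat.log 2 n < (j + 1) ^ 2 := by
          rw [hjdef]
          simpa [Nat.succ_eq_add_one] using Nat.lt_succ_sqrt' (Nat.log 2 n)
        omega
      calc n ≤ 2 ^ (Nat.log 2 n + 1) := (Nat.lt_pow_succ_log_self (by norm_num) n).le
        _ ≤ 2 ^ ((j + 1) ^ 2) := Nat.pow_le_pow_right (by norm_num) h2
    have hTa := hωJ j (le_trans (le_max_left _ _) hJj)
    have hTb := hωJ (j + 1) (by
      have := le_trans (le_max_left (J₀ + 1) 1) hJj
      omega)
    -- bound on the increment of mf
    have hΔub : mf ((2:ℕ) ^ ((j + 1) ^ 2)) - mf ((2:ℕ) ^ (j ^ 2))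
        ≤ θ * (2 * (j:ℝ) + 1) * Real.log 2 + 2 * K := by
      have h1 := hmf_ub ((2:ℕ) ^ ((j + 1) ^ 2)) Nat.one_le_two_pow
      have h2 := hmf_lb ((2:ℕ) ^ (j ^ 2)) Nat.one_le_two_pow
      rw [hlogN (j + 1)] at h1
      rw [hlogN j] at h2
      push_cast at h1
      nlinarith [hlog2]
    have hΔ0 : 0 ≤ mf ((2:ℕ) ^ ((j + 1) ^ 2)) - mf ((2:ℕ) ^ (j ^ 2)) := by
      have := hmf_mono (Nat.pow_le_pow_right (by norm_num : 1 ≤ 2)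
        (by nlinarith : j ^ 2 ≤ (j + 1) ^ 2))
      linarith
    have habs : |S n ω - mf n| ≤ c j + c (j + 1) +
        (θ * (2 * (j:ℝ) + 1) * Real.log 2 + 2 * K) := by
      have hs1 := hS_mono ω hnb
      have hs2 := hS_mono ω han
      have hm1 := hmf_mono han
      have hm2 := hmf_mono hnb
      have hta := abs_le.1 hTa
      have htb := abs_le.1 hTb
      have hcj := hc0 j
      have hcj1 := hc0 (j + 1)
      rw [abs_le]
      constructor
      · linarith [hta.1, htb.1, hΔub]
      · linarith [hta.2, htb.2, hΔub]
    have hlogn : (j:ℝ) ^ 2 * Real.log 2 ≤ Real.log n := by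
      rw [← hlogN j]
      have hap : (0:ℝ) < ((2:ℕ) ^ (j ^ 2) : ℕ) := by positivity
      have hanr : (((2:ℕ) ^ (j ^ 2) : ℕ) : ℝ) ≤ (n:ℝ) := by exact_mod_cast han
      exact Real.log_le_log hap hanr
    have hlogpos : (0:ℝ) < Real.log n := by
      have : (0:ℝ) < (j:ℝ) ^ 2 * Real.log 2 := by positivity
      linarith
    -- numerator bound
    have hnum : c j + c (j + 1) + (θ * (2 * (j:ℝ) + 1) * Real.log 2 + 2 * K)
        ≤ G j * ((j:ℝ) ^ 2 * Real.log 2) := by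
      have hrnn : (0:ℝ) ≤ (j:ℝ) ^ (-(4:ℝ)⁻¹) := Real.rpow_nonneg hjpos.le _
      have e1 : c j = (j:ℝ) ^ (-(4:ℝ)⁻¹) * ((j:ℝ) ^ 2 * Real.log 2) := rfl
      have e2 : c (j + 1) ≤ 4 * (j:ℝ) ^ (-(4:ℝ)⁻¹) * ((j:ℝ) ^ 2 * Real.log 2) := by
        have hcj1 : c (j + 1) = ((j:ℝ) + 1) ^ (-(4:ℝ)⁻¹) * (((j:ℝ) + 1) ^ 2 * Real.log 2) := by
          rw [hcdef]
          push_cast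
          ring_nf
        rw [hcj1]
        have hr : ((j:ℝ) + 1) ^ (-(4:ℝ)⁻¹) ≤ (j:ℝ) ^ (-(4:ℝ)⁻¹) :=
          Real.rpow_le_rpow_of_nonpos hjpos (by linarith) (by norm_num)
        have hsq : ((j:ℝ) + 1) ^ 2 ≤ 4 * (j:ℝ) ^ 2 := by nlinarith
        calc ((j:ℝ) + 1) ^ (-(4:ℝ)⁻¹) * (((j:ℝ) + 1) ^ 2 * Real.log 2)
            ≤ (j:ℝ) ^ (-(4:ℝ)⁻¹) * ((4 * (j:ℝ) ^ 2) * Real.log 2) := by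
              apply mul_le_mul hr ?_ ?_ hrnn
              · exact mul_le_mul_of_nonneg_right hsq hlog2.le
              · positivity
          _ = 4 * (j:ℝ) ^ (-(4:ℝ)⁻¹) * ((j:ℝ) ^ 2 * Real.log 2) := by ring
      have e3 : θ * (2 * (j:ℝ) + 1) * Real.log 2 + 2 * K
          ≤ (C₃ / (j:ℝ)) * ((j:ℝ) ^ 2 * Real.log 2) := by
        have heq : (C₃ / (j:ℝ)) * ((j:ℝ) ^ 2 * Real.log 2)
            = (3 * θ * Real.log 2 + 2 * K) * (j:ℝ) := by
          rw [hC₃def]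
          field_simp
        rw [heq]
        have a1 : 0 ≤ θ * Real.log 2 * ((j:ℝ) - 1) :=
          mul_nonneg (mul_nonneg hθ.le hlog2.le) (by linarith)
        have a2 : 0 ≤ K * ((j:ℝ) - 1) := mul_nonneg hK0 (by linarith)
        nlinarith [a1, a2]
      have eG : G j * ((j:ℝ) ^ 2 * Real.log 2)
          = 5 * (j:ℝ) ^ (-(4:ℝ)⁻¹) * ((j:ℝ) ^ 2 * Real.log 2)
            + (C₃ / (j:ℝ)) * ((j:ℝ) ^ 2 * Real.log 2) := by
        rw [hGdef]
        ring
      rw [eG]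
      linarith [e2, e3, e1.le, e1.ge]
    rw [norm_div, Real.norm_eq_abs, Real.norm_eq_abs, abs_of_pos hlogpos]
    have hnum0 : 0 ≤ c j + c (j + 1) + (θ * (2 * (j:ℝ) + 1) * Real.log 2 + 2 * K) := by
      nlinarith [hc0 j, hc0 (j + 1), hlog2, hK0, hθ, hjpos]
    calc |S n ω - mf n| / Real.log n
        ≤ (c j + c (j + 1) + (θ * (2 * (j:ℝ) + 1) * Real.log 2 + 2 * K))
            / ((j:ℝ) ^ 2 * Real.log 2) :=
          div_le_div₀ hnum0 habs (by positivity) hlogn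
      _ ≤ G j := by
          rw [div_le_iff₀ (by positivity)]
          exact hnum
  have hfinal := (h1.add hT0).add hmf_lim
  rw [add_zero, zero_add] at hfinal
  refine hfinal.congr fun n => ?_
  rw [← add_div, ← add_div]
  ring_nf
  simp only [hSdef]
  ring
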